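/- For integers m ≥ 1, n ≥ 0, and k ≥ 0, the horizontal recurrence holds: k · C(n,k;m) = sum over i from 1 to m of ((n+1)·i - k) · C(n, k-i; m), with C(n,j;m) = 0 for j < 0. -/

import Mathlib

open Polynomial Finset

/-- Polynomial (extended binomial) coefficient: the coefficient of `t^k` in
`(1 + t + ⋯ + t^m)^n`, defined to be `0` for negative `k`. -/
noncomputable def pc (m n : ℕ) (k : ℤ) : ℤ :=
  if 0 ≤ k then
    ((∑ i ∈ Finset.range (m + 1), (Polynomial.X : Polynomial ℤ) ^ i) ^ n).coeff k.toNat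
  else 0

private noncomputable def Pm (m : ℕ) : Polynomial ℤ := ∑ i ∈ Finset.range (m + 1), X ^ i

private lemma coeff_X_mul_derivative (q : Polynomial ℤ) (k : ℕ) :
    (X * derivative q).coeff k = (k : ℤ) * q.coeff k := by
  cases k with
  | zero => simp
  | succ j => rw [coeff_X_mul, coeff_derivative]; push_cast; ring

private lemma X_mul_derivative_Pm (m : ℕ) :
    X * derivative (Pm m) = ∑ i ∈ range (m + 1), C (i : ℤ) * X ^ i := by
  rw [Pm, derivative_sum, mul_sum]
  refine sum_congr rfl fun i _ => ?_
  cases i with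
  | zero => simp
  | succ j => rw [derivative_X_pow]; push_cast; ring

private lemma key (m n : ℕ) :
    X * derivative ((Pm m) ^ n) * Pm m = C (n : ℤ) * (X * derivative (Pm m)) * (Pm m) ^ n := by
  rcases Nat.eq_zero_or_pos n with h | h
  · simp [h]
  · rw [derivative_pow]
    have h2 : (Pm m) ^ (n - 1) * Pm m = (Pm m) ^ n := by
      rw [← pow_succ, Nat.sub_add_cancel h]
    calc X * (C (n : ℤ) * (Pm m) ^ (n - 1) * derivative (Pm m)) * Pm m
        = C (n : ℤ) * (X * derivative (Pm m)) * ((Pm m) ^ (n - 1) * Pm m) := by ring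
      _ = C (n : ℤ) * (X * derivative (Pm m)) * (Pm m) ^ n := by rw [h2]

private lemma coeff_mul_Pm (m : ℕ) (r : Polynomial ℤ) (k : ℕ) :
    (r * Pm m).coeff k = ∑ i ∈ range (m + 1), if i ≤ k then r.coeff (k - i) else 0 := by
  rw [Pm, mul_sum, finset_sum_coeff]
  exact sum_congr rfl fun i _ => coeff_mul_X_pow' r i k

private lemma key_coeff (m n k : ℕ) :
    ∑ i ∈ range (m + 1), (if i ≤ k then ((k - i : ℕ) : ℤ) * ((Pm m) ^ n).coeff (k - i) else 0)
      = (n : ℤ) * ∑ i ∈ range (m + 1),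
          (i : ℤ) * (if i ≤ k then ((Pm m) ^ n).coeff (k - i) else 0) := by
  have h := congrArg (fun p => Polynomial.coeff p k) (key m n)
  rw [coeff_mul_Pm] at h
  have hL : ∀ i ∈ range (m + 1),
      (if i ≤ k then (X * derivative ((Pm m) ^ n)).coeff (k - i) else 0)
        = (if i ≤ k then ((k - i : ℕ) : ℤ) * ((Pm m) ^ n).coeff (k - i) else 0) := by
    intro i _
    split <;> simp [coeff_X_mul_derivative]
  rw [Finset.sum_congr rfl hL] at h
  rw [h, X_mul_derivative_Pm, mul_assoc, coeff_C_mul, sum_mul, finset_sum_coeff]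
  congr 1
  refine sum_congr rfl fun i _ => ?_
  rw [mul_assoc, coeff_C_mul, mul_comm (X ^ i), coeff_mul_X_pow']

theorem pc_horizontal (m n k : ℕ) (hm : 1 ≤ m) :
    (k : ℤ) * pc m n k = ∑ i ∈ Finset.Icc 1 m, (((n : ℤ) + 1) * i - k) * pc m n ((k : ℤ) - i) := by
  have hq := key_coeff m n k
  rw [Finset.sum_range_succ', Finset.sum_range_succ'] at hq
  simp only [Nat.cast_zero, zero_mul, add_zero, Nat.zero_le, if_true, Nat.sub_zero] at hq
  -- hq : (∑ i ∈ range m, if i+1 ≤ k then ... ) + k * q.coeff k = n * ∑ i ∈ range m, (i+1) * ...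
  rw [← Finset.Ico_add_one_right_eq_Icc, Finset.sum_Ico_eq_sum_range]
  simp only [Nat.add_sub_cancel]

  have hpc : pc m n k = ((Pm m) ^ n).coeff k := by
    simp [pc, Pm]
  rw [hpc]
  have hterm : ∀ i ∈ range m,
      (((n : ℤ) + 1) * (↑(1 + i)) - k) * pc m n ((k : ℤ) - ↑(1 + i))
        = ((n : ℤ) * ((↑(i + 1)) * (if i + 1 ≤ k then ((Pm m) ^ n).coeff (k - (i + 1)) else 0)))
          - (if i + 1 ≤ k then ((k - (i + 1) : ℕ) : ℤ) * ((Pm m) ^ n).coeff (k - (i + 1)) else 0) := by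
    intro i _
    by_cases hik : i + 1 ≤ k
    · have h0 : (0 : ℤ) ≤ (k : ℤ) - ↑(1 + i) := by
        push_cast; omega
      have h1 : ((k : ℤ) - ↑(1 + i)).toNat = k - (i + 1) := by
        push_cast; omega
      rw [pc, if_pos h0, h1]
      simp only [hik, if_true]
      show _ = _
      have h2 : ((k - (i + 1) : ℕ) : ℤ) = (k : ℤ) - (i + 1) := by
        push_cast [hik]; ring
      rw [h2]
      have : ((Pm m) ^ n).coeff (k - (i + 1))
          = ((∑ j ∈ Finset.range (m + 1), (X : Polynomial ℤ) ^ j) ^ n).coeff (k - (i + 1)) := by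
        rw [Pm]
      rw [← this]
      push_cast
      ring
    · have h0 : ¬ (0 : ℤ) ≤ (k : ℤ) - ↑(1 + i) := by push_cast; omega
      rw [pc, if_neg h0]
      simp [hik]
  rw [Finset.sum_congr rfl hterm, Finset.sum_sub_distrib, ← Finset.mul_sum]
  omega
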